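/- Let K be a number field and let ε be a unit of O_K of infinite multiplicative order. Let a, b ∈ ℤ and d := gcd(a, b). Then: (i) the ideal of O_K generated by ε^a - 1 and ε^b - 1 equals the principal ideal generated by ε^d - 1; and (ii) if a and b are nonzero and (ε^b - 1) divides (ε^a - 1) in O_K, then (ε^b - 1)/(ε^d - 1) is a unit of O_K. -/

import Mathlib

noncomputable section

open NumberField

lemma aux_unit_sub_one_dvd {R : Type*} [CommRing R] (u : Rˣ) (k : ℤ) :
    (u : R) - 1 ∣ ((u ^ k : Rˣ) : R) - 1 := by
  obtain ⟨n, rfl | rfl⟩ := k.eq_nat_or_neg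
  · rw [zpow_natCast, Units.val_pow_eq_pow_val]
    simpa using sub_dvd_pow_sub_pow (u : R) 1 n
  · have h1 : (u : R) - 1 ∣ (u : R) ^ n - 1 := by
      simpa using sub_dvd_pow_sub_pow (u : R) 1 n
    have h2 : ((u ^ (-(n : ℤ)) : Rˣ) : R) - 1
        = -((u ^ (-(n : ℤ)) : Rˣ) : R) * ((u : R) ^ n - 1) := by
      have h3 : ((u ^ (-(n : ℤ)) : Rˣ) : R) * (u : R) ^ n = 1 := by
        rw [← Units.val_pow_eq_pow_val, ← Units.val_mul, ← zpow_natCast, ← zpow_add]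
        simp
      rw [neg_mul, mul_sub, mul_one, h3]; ring
    rw [h2]
    exact h1.mul_left _

lemma aux_dvd_of_dvd {R : Type*} [CommRing R] (u : Rˣ) (d m : ℤ) (h : d ∣ m) :
    ((u ^ d : Rˣ) : R) - 1 ∣ ((u ^ m : Rˣ) : R) - 1 := by
  obtain ⟨k, rfl⟩ := h
  rw [zpow_mul]
  exact aux_unit_sub_one_dvd (u ^ d) k

theorem stmt7 (K : Type) [Field K] [NumberField K] (ε : (𝓞 K)ˣ)
    (hε : ∀ n : ℕ, 0 < n → ε ^ n ≠ 1) (a b : ℤ) :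
    (Ideal.span {((ε ^ a : (𝓞 K)ˣ) : 𝓞 K) - 1, ((ε ^ b : (𝓞 K)ˣ) : 𝓞 K) - 1}
        = Ideal.span {((ε ^ (Int.gcd a b : ℤ) : (𝓞 K)ˣ) : 𝓞 K) - 1}) ∧
    (a ≠ 0 → b ≠ 0 →
      ((ε ^ b : (𝓞 K)ˣ) : 𝓞 K) - 1 ∣ ((ε ^ a : (𝓞 K)ˣ) : 𝓞 K) - 1 →
      ∃ v : (𝓞 K)ˣ, ((ε ^ b : (𝓞 K)ˣ) : 𝓞 K) - 1
        = (v : 𝓞 K) * (((ε ^ (Int.gcd a b : ℤ) : (𝓞 K)ˣ) : 𝓞 K) - 1)) := by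
  set d : ℤ := (Int.gcd a b : ℤ) with hd
  -- divisibility facts
  have hda : ((ε ^ d : (𝓞 K)ˣ) : 𝓞 K) - 1 ∣ ((ε ^ a : (𝓞 K)ˣ) : 𝓞 K) - 1 :=
    aux_dvd_of_dvd ε d a (Int.gcd_dvd_left a b)
  have hdb : ((ε ^ d : (𝓞 K)ˣ) : 𝓞 K) - 1 ∣ ((ε ^ b : (𝓞 K)ˣ) : 𝓞 K) - 1 :=
    aux_dvd_of_dvd ε d b (Int.gcd_dvd_right a b)
  -- Bezout: ε^d - 1 ∈ span {ε^a - 1, ε^b - 1}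
  have hmem : ((ε ^ d : (𝓞 K)ˣ) : 𝓞 K) - 1 ∈
      Ideal.span {((ε ^ a : (𝓞 K)ˣ) : 𝓞 K) - 1, ((ε ^ b : (𝓞 K)ˣ) : 𝓞 K) - 1} := by
    have hbez : d = a * Int.gcdA a b + b * Int.gcdB a b := Int.gcd_eq_gcd_ab a b
    obtain ⟨c₁, hc₁⟩ := aux_dvd_of_dvd ε a (a * Int.gcdA a b) ⟨Int.gcdA a b, rfl⟩
    obtain ⟨c₂, hc₂⟩ := aux_dvd_of_dvd ε b (b * Int.gcdB a b) ⟨Int.gcdB a b, rfl⟩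
    rw [Ideal.mem_span_pair]
    refine ⟨c₁ * ((ε ^ (b * Int.gcdB a b) : (𝓞 K)ˣ) : 𝓞 K), c₂, ?_⟩
    have key : ((ε ^ d : (𝓞 K)ˣ) : 𝓞 K) - 1
        = (((ε ^ (a * Int.gcdA a b) : (𝓞 K)ˣ) : 𝓞 K) - 1)
            * ((ε ^ (b * Int.gcdB a b) : (𝓞 K)ˣ) : 𝓞 K)
          + (((ε ^ (b * Int.gcdB a b) : (𝓞 K)ˣ) : 𝓞 K) - 1) := by
      have : ((ε ^ d : (𝓞 K)ˣ) : 𝓞 K)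
          = ((ε ^ (a * Int.gcdA a b) : (𝓞 K)ˣ) : 𝓞 K)
            * ((ε ^ (b * Int.gcdB a b) : (𝓞 K)ˣ) : 𝓞 K) := by
        rw [← Units.val_mul, ← zpow_add, ← hbez]
      rw [this]; ring
    rw [key, hc₁, hc₂]; ring
  have hspan : Ideal.span {((ε ^ a : (𝓞 K)ˣ) : 𝓞 K) - 1, ((ε ^ b : (𝓞 K)ˣ) : 𝓞 K) - 1}
      = Ideal.span {((ε ^ d : (𝓞 K)ˣ) : 𝓞 K) - 1} := by
    apply le_antisymm
    · rw [Ideal.span_le]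
      rintro x (rfl | rfl) <;> rw [SetLike.mem_coe, Ideal.mem_span_singleton]
      · exact hda
      · exact hdb
    · rw [Ideal.span_le, Set.singleton_subset_iff]
      exact hmem
  refine ⟨hspan, fun ha hb hdvd => ?_⟩
  have h1 : Ideal.span {((ε ^ a : (𝓞 K)ˣ) : 𝓞 K) - 1, ((ε ^ b : (𝓞 K)ˣ) : 𝓞 K) - 1}
      = Ideal.span {((ε ^ b : (𝓞 K)ˣ) : 𝓞 K) - 1} := by
    apply le_antisymm
    · rw [Ideal.span_le]
      rintro x (rfl | rfl) <;> rw [SetLike.mem_coe, Ideal.mem_span_singleton] <;>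
        first | exact hdvd | exact dvd_rfl
    · exact Ideal.span_mono (Set.subset_insert _ _)
  have h2 : Associated (((ε ^ d : (𝓞 K)ˣ) : 𝓞 K) - 1) (((ε ^ b : (𝓞 K)ˣ) : 𝓞 K) - 1) :=
    (Ideal.span_singleton_eq_span_singleton.mp (h1 ▸ hspan)).symm
  obtain ⟨v, hv⟩ := h2
  exact ⟨v, by rw [← hv]; ring⟩
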